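/- The implied vol I(y), defined implicitly by c_b(y, I(y)) = E[c_b(y + η(G-1), √G)], is continuously differentiable on ℝ with derivative I'(y) = [Φ(-y/I(y)) - E[Φ(-(y + η(G-1))/√G)]] / φ(-y/I(y)). -/

import Mathlib

open MeasureTheory ProbabilityTheory Real

noncomputable def normalPdf (x : ℝ) : ℝ := (Real.sqrt (2 * Real.pi))⁻¹ * Real.exp (-(x ^ 2) / 2)

noncomputable def normalCdf (x : ℝ) : ℝ := ∫ t in Set.Iic x, normalPdf t

noncomputable def cb (y σ : ℝ) : ℝ := -y * normalCdf (-y / σ) + σ * normalPdf (-y / σ)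

lemma normalPdf_pos (x : ℝ) : 0 < normalPdf x := by
  unfold normalPdf
  positivity

lemma contDiff_normalPdf : ContDiff ℝ (⊤ : ℕ∞) normalPdf := by
  unfold normalPdf
  exact contDiff_const.mul (((contDiff_id.pow 2).neg.div_const 2).exp)

lemma continuous_normalPdf : Continuous normalPdf := contDiff_normalPdf.continuous

lemma integrable_normalPdf : Integrable normalPdf := by
  have : Integrable (fun x : ℝ => Real.exp (-(2⁻¹ : ℝ) * x ^ 2)) := integrable_exp_neg_mul_sq (by norm_num)
  have h2 : (fun x : ℝ => normalPdf x) = fun x => (Real.sqrt (2 * Real.pi))⁻¹ * Real.exp (-(2⁻¹:ℝ) * x ^ 2) := by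
    funext x; unfold normalPdf; ring_nf
  exact (this.const_mul ((Real.sqrt (2 * Real.pi))⁻¹)).congr
    (Filter.Eventually.of_forall fun x => by unfold normalPdf; ring)

lemma integral_normalPdf : ∫ x, normalPdf x = 1 := by
  unfold normalPdf
  rw [integral_const_mul]
  have : (fun x : ℝ => Real.exp (-(x^2)/2)) = fun x => Real.exp (-(2⁻¹:ℝ) * x ^ 2) := by
    funext x; ring_nf
  rw [this, integral_gaussian]
  rw [show π / 2⁻¹ = 2 * π by ring]
  rw [inv_mul_cancel₀]
  positivity

lemma normalCdf_nonneg (x : ℝ) : 0 ≤ normalCdf x :=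
  integral_nonneg fun t => (normalPdf_pos t).le

lemma normalCdf_le_one (x : ℝ) : normalCdf x ≤ 1 := by
  rw [← integral_normalPdf]
  unfold normalCdf
  rw [show ∫ x, normalPdf x = ∫ x in Set.univ, normalPdf x by rw [Measure.restrict_univ]]
  exact setIntegral_mono_set integrable_normalPdf.integrableOn
    (Filter.Eventually.of_forall fun t => (normalPdf_pos t).le)
    (HasSubset.Subset.eventuallyLE (Set.subset_univ _))

lemma hasDerivAt_normalCdf (x : ℝ) : HasDerivAt normalCdf (normalPdf x) x := by
  have key : ∀ u : ℝ, normalCdf u = normalCdf 0 + ∫ t in (0:ℝ)..u, normalPdf t := by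
    intro u
    have := intervalIntegral.integral_Iic_sub_Iic (f := normalPdf) (μ := volume)
      (a := 0) (b := u) integrable_normalPdf.integrableOn integrable_normalPdf.integrableOn
    unfold normalCdf
    linarith [this]
  have h := (continuous_normalPdf.integral_hasStrictDerivAt 0 x).hasDerivAt
  have : HasDerivAt (fun u => normalCdf 0 + ∫ t in (0:ℝ)..u, normalPdf t) (normalPdf x) x :=
    h.const_add _
  have heq : normalCdf = fun u => normalCdf 0 + ∫ t in (0:ℝ)..u, normalPdf t := funext key
  rw [heq]
  exact this

lemma contDiff_normalCdf : ContDiff ℝ (⊤ : ℕ∞) normalCdf := by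
  rw [contDiff_infty_iff_deriv]
  constructor
  · exact fun x => (hasDerivAt_normalCdf x).differentiableAt
  · have : deriv normalCdf = normalPdf := funext fun x => (hasDerivAt_normalCdf x).deriv
    rw [this]; exact contDiff_normalPdf

lemma continuous_normalCdf : Continuous normalCdf := contDiff_normalCdf.continuous

lemma hasDerivAt_normalPdf (x : ℝ) : HasDerivAt normalPdf (-x * normalPdf x) x := by
  unfold normalPdf
  have h : HasDerivAt (fun x : ℝ => -(x ^ 2) / 2) (-x) x := by
    have := ((hasDerivAt_pow 2 x).neg).div_const 2
    simpa using this.congr_deriv (by ring)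
  have := ((h.exp).const_mul (Real.sqrt (2 * Real.pi))⁻¹)
  exact this.congr_deriv (by ring)

lemma hasDerivAt_cb_y (y σ : ℝ) (hσ : σ ≠ 0) :
    HasDerivAt (fun y => cb y σ) (-(normalCdf (-y / σ))) y := by
  have hu : HasDerivAt (fun y : ℝ => -y / σ) (-1 / σ) y := by
    simpa using ((hasDerivAt_id y).neg.div_const σ)
  have hC : HasDerivAt (fun y : ℝ => normalCdf (-y / σ)) (normalPdf (-y / σ) * (-1 / σ)) y :=
    by have := (hasDerivAt_normalCdf (-y / σ)).comp y hu; exact this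
  have hP : HasDerivAt (fun y : ℝ => normalPdf (-y / σ))
      ((-(-y / σ) * normalPdf (-y / σ)) * (-1 / σ)) y :=
    by have := (hasDerivAt_normalPdf (-y / σ)).comp y hu; exact this
  have h1 : HasDerivAt (fun y : ℝ => -y * normalCdf (-y / σ))
      ((-1) * normalCdf (-y / σ) + (-y) * (normalPdf (-y / σ) * (-1 / σ))) y :=
    ((hasDerivAt_id y).neg.congr_deriv (by norm_num)).mul hC
  have h2 := hP.const_mul σ
  have := h1.add h2
  exact this.congr_deriv (by field_simp; ring)

lemma hasDerivAt_cb_sigma (y σ : ℝ) (hσ : σ ≠ 0) :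
    HasDerivAt (fun σ => cb y σ) (normalPdf (-y / σ)) σ := by
  have hu : HasDerivAt (fun σ : ℝ => -y / σ) (y / σ ^ 2) σ := by
    have h := (hasDerivAt_inv hσ).const_mul (-y)
    have : -y * -(σ ^ 2)⁻¹ = y / σ ^ 2 := by field_simp
    rw [this] at h
    simpa [div_eq_mul_inv] using h
  have hC : HasDerivAt (fun σ : ℝ => normalCdf (-y / σ)) (normalPdf (-y / σ) * (y / σ ^ 2)) σ :=
    by have := (hasDerivAt_normalCdf (-y / σ)).comp σ hu; exact this
  have hP : HasDerivAt (fun σ : ℝ => normalPdf (-y / σ))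
      ((-(-y / σ) * normalPdf (-y / σ)) * (y / σ ^ 2)) σ :=
    by have := (hasDerivAt_normalPdf (-y / σ)).comp σ hu; exact this
  have h1 := hC.const_mul (-y)
  have h2 : HasDerivAt (fun σ : ℝ => σ * normalPdf (-y / σ))
      (1 * normalPdf (-y / σ) + σ * ((-(-y / σ) * normalPdf (-y / σ)) * (y / σ ^ 2))) σ :=
    (hasDerivAt_id σ).mul hP
  have := h1.add h2
  exact this.congr_deriv (by field_simp; ring)

lemma cb_strictMonoOn (y : ℝ) : StrictMonoOn (fun σ => cb y σ) (Set.Ioi 0) := by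
  apply strictMonoOn_of_deriv_pos (convex_Ioi 0)
  · intro σ hσ
    exact (hasDerivAt_cb_sigma y σ (ne_of_gt hσ)).differentiableAt.continuousAt.continuousWithinAt
  · intro σ hσ
    rw [interior_Ioi] at hσ
    rw [(hasDerivAt_cb_sigma y σ (ne_of_gt hσ)).deriv]
    exact normalPdf_pos _

lemma contDiffAt_cb (p : ℝ × ℝ) (hp : p.2 ≠ 0) :
    ContDiffAt ℝ 1 (fun q : ℝ × ℝ => cb q.1 q.2) p := by
  have hu : ContDiffAt ℝ 1 (fun q : ℝ × ℝ => -q.1 / q.2) p :=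
    (contDiff_fst.neg.contDiffAt).div contDiff_snd.contDiffAt hp
  have hC : ContDiffAt ℝ 1 (fun q : ℝ × ℝ => normalCdf (-q.1 / q.2)) p :=
    ((contDiff_normalCdf.of_le (mod_cast le_top)).contDiffAt).comp p hu
  have hP : ContDiffAt ℝ 1 (fun q : ℝ × ℝ => normalPdf (-q.1 / q.2)) p :=
    ((contDiff_normalPdf.of_le (mod_cast le_top)).contDiffAt).comp p hu
  exact ((contDiff_fst.neg.contDiffAt).mul hC).add ((contDiff_snd.contDiffAt).mul hP)

noncomputable def mapAB (a b : ℝ) : (ℝ × ℝ) →L[ℝ] (ℝ × ℝ) :=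
  (ContinuousLinearMap.fst ℝ ℝ ℝ).prod
    (a • ContinuousLinearMap.fst ℝ ℝ ℝ + b • ContinuousLinearMap.snd ℝ ℝ ℝ)

lemma mapAB_apply (a b : ℝ) (x : ℝ × ℝ) : mapAB a b x = (x.1, a * x.1 + b * x.2) := by
  simp [mapAB]

noncomputable def equivAB (a b : ℝ) (hb : b ≠ 0) : (ℝ × ℝ) ≃L[ℝ] (ℝ × ℝ) :=
  ContinuousLinearEquiv.equivOfInverse (mapAB a b) (mapAB (-a / b) b⁻¹)
    (fun x => by
      simp only [mapAB_apply]
      refine Prod.ext rfl ?_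
      field_simp
      ring)
    (fun x => by
      simp only [mapAB_apply]
      refine Prod.ext rfl ?_
      field_simp
      ring)

lemma equivAB_coe (a b : ℝ) (hb : b ≠ 0) : (equivAB a b hb : (ℝ × ℝ) →L[ℝ] (ℝ × ℝ)) = mapAB a b := rfl

lemma equivAB_symm_coe (a b : ℝ) (hb : b ≠ 0) :
    ((equivAB a b hb).symm : (ℝ × ℝ) →L[ℝ] (ℝ × ℝ)) = mapAB (-a / b) b⁻¹ := rfl

lemma decomp (L : (ℝ × ℝ) →L[ℝ] ℝ) (x : ℝ × ℝ) :
    L x = x.1 * L (1, 0) + x.2 * L (0, 1) := by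
  have hx : x = x.1 • ((1 : ℝ), (0 : ℝ)) + x.2 • ((0 : ℝ), (1 : ℝ)) := by
    refine Prod.ext ?_ ?_ <;> simp
  conv_lhs => rw [hx]
  rw [map_add, L.map_smul, L.map_smul]
  simp [smul_eq_mul]

lemma hasStrictFDerivAt_Phi (y₀ σ₀ : ℝ) (hσ : 0 < σ₀) :
    HasStrictFDerivAt (fun q : ℝ × ℝ => (q.1, cb q.1 q.2))
      (equivAB (-(normalCdf (-y₀ / σ₀))) (normalPdf (-y₀ / σ₀))
        (ne_of_gt (normalPdf_pos _)) : (ℝ × ℝ) →L[ℝ] (ℝ × ℝ)) (y₀, σ₀) := by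
  set a := -(normalCdf (-y₀ / σ₀)) with ha
  set b := normalPdf (-y₀ / σ₀) with hb
  have hg : ContDiffAt ℝ 1 (fun q : ℝ × ℝ => cb q.1 q.2) (y₀, σ₀) :=
    contDiffAt_cb _ (ne_of_gt hσ)
  have hgs : HasStrictFDerivAt (fun q : ℝ × ℝ => cb q.1 q.2)
      (fderiv ℝ (fun q : ℝ × ℝ => cb q.1 q.2) (y₀, σ₀)) (y₀, σ₀) :=
    hg.hasStrictFDerivAt one_ne_zero
  set L := fderiv ℝ (fun q : ℝ × ℝ => cb q.1 q.2) (y₀, σ₀) with hL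
  have hfd : HasFDerivAt (fun q : ℝ × ℝ => cb q.1 q.2) L (y₀, σ₀) := hgs.hasFDerivAt
  -- compute L (1,0)
  have h10 : L (1, 0) = a := by
    have hk : HasDerivAt (fun y : ℝ => ((y, σ₀) : ℝ × ℝ)) ((1 : ℝ), (0 : ℝ)) y₀ :=
      (hasDerivAt_id y₀).prodMk (hasDerivAt_const y₀ σ₀)
    have hcomp : HasDerivAt (fun y : ℝ => cb y σ₀) (L (1, 0)) y₀ :=
      by have := hfd.comp_hasDerivAt y₀ hk; exact this
    exact hcomp.unique (hasDerivAt_cb_y y₀ σ₀ (ne_of_gt hσ))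
  have h01 : L (0, 1) = b := by
    have hk : HasDerivAt (fun σ : ℝ => ((y₀, σ) : ℝ × ℝ)) ((0 : ℝ), (1 : ℝ)) σ₀ :=
      (hasDerivAt_const σ₀ y₀).prodMk (hasDerivAt_id σ₀)
    have hcomp : HasDerivAt (fun σ : ℝ => cb y₀ σ) (L (0, 1)) σ₀ :=
      by have := hfd.comp_hasDerivAt σ₀ hk; exact this
    exact hcomp.unique (hasDerivAt_cb_sigma y₀ σ₀ (ne_of_gt hσ))
  have hLeq : L = a • ContinuousLinearMap.fst ℝ ℝ ℝ + b • ContinuousLinearMap.snd ℝ ℝ ℝ := by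
    refine ContinuousLinearMap.ext fun x => ?_
    rw [decomp L x, h10, h01]
    simp [smul_eq_mul]
    ring
  have : HasStrictFDerivAt (fun q : ℝ × ℝ => (q.1, cb q.1 q.2))
      ((ContinuousLinearMap.fst ℝ ℝ ℝ).prod L) (y₀, σ₀) :=
    (hasStrictFDerivAt_fst (𝕜 := ℝ) (E := ℝ) (F := ℝ)).prodMk hgs
  rw [hLeq] at this
  rw [equivAB_coe]
  exact this

lemma hasDerivAt_expectation {Ω : Type*} [MeasurableSpace Ω] (μ : Measure Ω)
    [IsProbabilityMeasure μ] (G : Ω → ℝ) (η : ℝ)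
    (hpos : ∀ᵐ ω ∂μ, 0 < G ω)
    (hint : ∀ y : ℝ, Integrable (fun ω => cb (y + η * (G ω - 1)) (Real.sqrt (G ω))) μ)
    (hintCdf : ∀ y : ℝ, Integrable (fun ω => normalCdf (-(y + η * (G ω - 1)) / Real.sqrt (G ω))) μ)
    (y₀ : ℝ) :
    HasDerivAt (fun y => ∫ ω, cb (y + η * (G ω - 1)) (Real.sqrt (G ω)) ∂μ)
      (-(∫ ω, normalCdf (-(y₀ + η * (G ω - 1)) / Real.sqrt (G ω)) ∂μ)) y₀ := by
  have key := hasDerivAt_integral_of_dominated_loc_of_deriv_le (μ := μ)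
    (F := fun y ω => cb (y + η * (G ω - 1)) (Real.sqrt (G ω)))
    (F' := fun y ω => -(normalCdf (-(y + η * (G ω - 1)) / Real.sqrt (G ω))))
    (x₀ := y₀) (bound := fun _ => 1) (s := Metric.ball y₀ 1) (Metric.ball_mem_nhds y₀ one_pos)
    (Filter.Eventually.of_forall fun y => (hint y).aestronglyMeasurable)
    (hint y₀) ((hintCdf y₀).aestronglyMeasurable.neg)
    (Filter.Eventually.of_forall fun ω => fun y _ => by
      rw [Real.norm_eq_abs, abs_neg, abs_of_nonneg (normalCdf_nonneg _)]
      exact normalCdf_le_one _)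
    (integrable_const 1)
    (hpos.mono fun ω hω => fun y _ => by
      have hs : Real.sqrt (G ω) ≠ 0 := ne_of_gt (Real.sqrt_pos.mpr hω)
      have := (hasDerivAt_cb_y (y + η * (G ω - 1)) (Real.sqrt (G ω)) hs).comp y
        ((hasDerivAt_id y).add_const (η * (G ω - 1)))
      simpa [Function.comp_def] using this)
  have h2 := key.2
  rwa [integral_neg] at h2

theorem implied_vol_C1 {Ω : Type*} [MeasurableSpace Ω] (μ : Measure Ω)
    [IsProbabilityMeasure μ] (G : Ω → ℝ) (η : ℝ)
    (hpos : ∀ᵐ ω ∂μ, 0 < G ω) (hG : Integrable G μ)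
    (hmean : ∫ ω, G ω ∂μ = 1)
    (hint : ∀ y : ℝ,
      Integrable (fun ω => cb (y + η * (G ω - 1)) (Real.sqrt (G ω))) μ)
    (hintCdf : ∀ y : ℝ,
      Integrable (fun ω => normalCdf (-(y + η * (G ω - 1)) / Real.sqrt (G ω))) μ)
    (I : ℝ → ℝ)
    (hIpos : ∀ y, 0 < I y)
    (hIeq : ∀ y,
      cb y (I y) = ∫ ω, cb (y + η * (G ω - 1)) (Real.sqrt (G ω)) ∂μ) :
    ContDiff ℝ 1 I ∧ ∀ y : ℝ,
      HasDerivAt I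
        ((normalCdf (-y / I y) -
          ∫ ω, normalCdf (-(y + η * (G ω - 1)) / Real.sqrt (G ω)) ∂μ) /
          normalPdf (-y / I y)) y := by
  set h : ℝ → ℝ := fun y => ∫ ω, cb (y + η * (G ω - 1)) (Real.sqrt (G ω)) ∂μ with hh_def
  have hh : ∀ y, HasDerivAt h
      (-(∫ ω, normalCdf (-(y + η * (G ω - 1)) / Real.sqrt (G ω)) ∂μ)) y :=
    fun y => hasDerivAt_expectation μ G η hpos hint hintCdf y
  have key : ∀ y₀ : ℝ, HasDerivAt I
      ((normalCdf (-y₀ / I y₀) -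
        ∫ ω, normalCdf (-(y₀ + η * (G ω - 1)) / Real.sqrt (G ω)) ∂μ) /
        normalPdf (-y₀ / I y₀)) y₀ := by
    intro y₀
    set σ₀ := I y₀ with hσ₀_def
    have hσ₀ : 0 < σ₀ := hIpos y₀
    set a : ℝ := -(normalCdf (-y₀ / σ₀)) with ha_def
    set b : ℝ := normalPdf (-y₀ / σ₀) with hb_def
    have hb : b ≠ 0 := ne_of_gt (normalPdf_pos _)
    set Φm : ℝ × ℝ → ℝ × ℝ := fun q => (q.1, cb q.1 q.2) with hΦm_def
    have hΦ : HasStrictFDerivAt Φm ((equivAB a b hb : (ℝ × ℝ) →L[ℝ] (ℝ × ℝ))) (y₀, σ₀) :=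
      hasStrictFDerivAt_Phi y₀ σ₀ hσ₀
    set linv : ℝ × ℝ → ℝ × ℝ := hΦ.localInverse Φm (equivAB a b hb) (y₀, σ₀) with hlinv_def
    have himg : Φm (y₀, σ₀) = (y₀, h y₀) := by
      simp only [hΦm_def]
      exact Prod.ext rfl (hIeq y₀)
    set k : ℝ → ℝ × ℝ := fun y => (y, h y) with hk_def
    set D : ℝ := -(∫ ω, normalCdf (-(y₀ + η * (G ω - 1)) / Real.sqrt (G ω)) ∂μ) with hD_def
    have hk : HasDerivAt k ((1 : ℝ), D) y₀ := (hasDerivAt_id y₀).prodMk (hh y₀)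
    have hkc : ContinuousAt k y₀ := hk.continuousAt
    have hky₀ : k y₀ = (y₀, h y₀) := rfl
    -- right inverse eventually
    have hrinv : ∀ᶠ q in nhds ((y₀, h y₀) : ℝ × ℝ), Φm (linv q) = q := by
      have := hΦ.eventually_right_inverse
      rwa [himg] at this
    have E1 : ∀ᶠ y in nhds y₀, Φm (linv (k y)) = k y := by
      have ht : Filter.Tendsto k (nhds y₀) (nhds ((y₀, h y₀) : ℝ × ℝ)) := by
        simpa [hky₀] using hkc.tendsto
      exact ht.eventually hrinv
    -- local inverse value and continuity
    have hval : linv (y₀, h y₀) = (y₀, σ₀) := by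
      have := hΦ.localInverse_apply_image
      rwa [himg] at this
    have hcontlinv : ContinuousAt linv (y₀, h y₀) := by
      have := hΦ.localInverse_continuousAt
      rwa [himg] at this
    have htend2 : Filter.Tendsto (fun y => (linv (k y)).2) (nhds y₀) (nhds σ₀) := by
      have h1 : Filter.Tendsto (fun y => linv (k y)) (nhds y₀) (nhds ((y₀, σ₀) : ℝ × ℝ)) := by
        have ht : Filter.Tendsto k (nhds y₀) (nhds ((y₀, h y₀) : ℝ × ℝ)) := by
          simpa [hky₀] using hkc.tendsto
        have := hcontlinv.tendsto.comp ht
        rwa [hval] at this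
      exact (continuous_snd.tendsto _).comp h1
    have E2 : ∀ᶠ y in nhds y₀, 0 < (linv (k y)).2 := htend2 (Ioi_mem_nhds hσ₀)
    -- eventual equality of I with the local solution
    have Ieq : (fun y => (linv (k y)).2) =ᶠ[nhds y₀] I := by
      filter_upwards [E1, E2] with y h1 h2
      have hfst : (linv (k y)).1 = y := congrArg Prod.fst h1
      have hsnd : cb (linv (k y)).1 (linv (k y)).2 = h y := congrArg Prod.snd h1
      rw [hfst] at hsnd
      have hIy : cb y (I y) = h y := hIeq y
      exact (cb_strictMonoOn y).injOn h2 (hIpos y) (by rw [hsnd, hIy])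
    -- the derivative of the local solution
    have hlinvd : HasFDerivAt linv
        (((equivAB a b hb).symm : (ℝ × ℝ) →L[ℝ] (ℝ × ℝ))) (y₀, h y₀) := by
      have := hΦ.to_localInverse.hasFDerivAt
      rwa [himg] at this
    have hcomp : HasDerivAt (fun y => linv (k y))
        (((equivAB a b hb).symm : (ℝ × ℝ) →L[ℝ] (ℝ × ℝ)) ((1 : ℝ), D)) y₀ := by
      have := hlinvd.comp_hasDerivAt y₀ hk
      exact this
    have hsnd : HasDerivAt (fun y => (linv (k y)).2)
        ((((equivAB a b hb).symm : (ℝ × ℝ) →L[ℝ] (ℝ × ℝ)) ((1 : ℝ), D)).2) y₀ := by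
      have := (ContinuousLinearMap.snd ℝ ℝ ℝ).hasFDerivAt.comp_hasDerivAt y₀ hcomp
      exact this
    have hDval : ((((equivAB a b hb).symm : (ℝ × ℝ) →L[ℝ] (ℝ × ℝ)) ((1 : ℝ), D)).2)
        = (normalCdf (-y₀ / σ₀) - (∫ ω, normalCdf (-(y₀ + η * (G ω - 1)) / Real.sqrt (G ω)) ∂μ)) / b := by
      rw [equivAB_symm_coe, mapAB_apply]
      simp only [ha_def, hD_def]
      field_simp
      ring
    rw [hDval] at hsnd
    exact hsnd.congr_of_eventuallyEq Ieq.symm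
  refine ⟨?_, key⟩
  rw [contDiff_one_iff_deriv]
  have hdiff : Differentiable ℝ I := fun y => (key y).differentiableAt
  refine ⟨hdiff, ?_⟩
  have hderiv : deriv I = fun y =>
      (normalCdf (-y / I y) -
        ∫ ω, normalCdf (-(y + η * (G ω - 1)) / Real.sqrt (G ω)) ∂μ) /
        normalPdf (-y / I y) := funext fun y => (key y).deriv
  rw [hderiv]
  have hIcont : Continuous I := hdiff.continuous
  have hc1 : Continuous (fun y : ℝ => -y / I y) :=
    Continuous.div continuous_id.neg hIcont fun y => ne_of_gt (hIpos y)
  have hcontInt : Continuous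
      (fun y => ∫ ω, normalCdf (-(y + η * (G ω - 1)) / Real.sqrt (G ω)) ∂μ) := by
    apply continuous_of_dominated (bound := fun _ => (1 : ℝ))
    · exact fun y => (hintCdf y).aestronglyMeasurable
    · intro y
      exact Filter.Eventually.of_forall fun ω => by
        rw [Real.norm_eq_abs, abs_of_nonneg (normalCdf_nonneg _)]
        exact normalCdf_le_one _
    · exact integrable_const 1
    · exact Filter.Eventually.of_forall fun ω =>
        continuous_normalCdf.comp (((continuous_id.add continuous_const).neg).div_const _)
  exact Continuous.div ((continuous_normalCdf.comp hc1).sub hcontInt)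
    (continuous_normalPdf.comp hc1) fun y => ne_of_gt (normalPdf_pos _)
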